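/- Let N, m, n, a, b be nonnegative integers with n ≥ a + b and N ≥ n + (n + 1 − a − b)·m. If c is a 2-coloring of the Boolean lattice Q_N in which every subset of [N] of size less than a is blue and every subset of [N] of size greater than N − b is blue, then Q_N contains a blue copy of Q_n or a red copy of Q_m. -/

import Mathlib

/-- A red copy of the Boolean lattice `Q m` inside the 2-colored Boolean lattice `Q N`,
where `c S = true` means `S` is red and `c S = false` means `S` is blue. -/
def HasRedCopy (m N : ℕ) (c : Finset (Fin N) → Bool) : Prop :=
  ∃ f : Finset (Fin m) → Finset (Fin N),
    Function.Injective f ∧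
    (∀ S T : Finset (Fin m), S ⊆ T ↔ f S ⊆ f T) ∧
    (∀ S : Finset (Fin m), c (f S) = true)

/-- A blue copy of the Boolean lattice `Q m` inside the 2-colored Boolean lattice `Q N`. -/
def HasBlueCopy (m N : ℕ) (c : Finset (Fin N) → Bool) : Prop :=
  ∃ f : Finset (Fin m) → Finset (Fin N),
    Function.Injective f ∧
    (∀ S T : Finset (Fin m), S ⊆ T ↔ f S ⊆ f T) ∧
    (∀ S : Finset (Fin m), c (f S) = false)

lemma copy_inj {α β : Type*} (f : Finset α → Finset β)
    (h : ∀ S T : Finset α, S ⊆ T ↔ f S ⊆ f T) : Function.Injective f := by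
  intro S T hST
  exact subset_antisymm ((h S T).2 (hST ▸ Finset.Subset.refl (f S)))
    ((h T S).2 (hST.symm ▸ Finset.Subset.refl (f T)))

/-- Pick a blue blob inside block `i` extending `F`, if one exists. -/
noncomputable def pickT (N m n a : ℕ) (c : Finset (Fin N) → Bool) (i : ℕ)
    (F : Finset (Fin N)) : Finset (Fin N) :=
  if h : a ≤ i ∧ ∃ T : Finset (Fin N),
      (∀ x ∈ T, n + (i - a) * m ≤ (x : ℕ) ∧ (x : ℕ) < n + (i - a) * m + m) ∧
      c (F ∪ T) = false
  then h.2.choose else ∅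

lemma pickT_bounds (N m n a : ℕ) (c : Finset (Fin N) → Bool) (i : ℕ) (F : Finset (Fin N)) :
    ∀ x ∈ pickT N m n a c i F,
      n + (i - a) * m ≤ (x : ℕ) ∧ (x : ℕ) < n + (i - a) * m + m := by
  unfold pickT
  split_ifs with h
  · exact fun x hx => h.2.choose_spec.1 x hx
  · simp

lemma pickT_empty (N m n a : ℕ) (c : Finset (Fin N) → Bool) (i : ℕ) (F : Finset (Fin N))
    (h : i < a) : pickT N m n a c i F = ∅ :=
  dif_neg (fun hc => absurd hc.1 (not_le.mpr h))

lemma pickT_blue (N m n a : ℕ) (c : Finset (Fin N) → Bool) (i : ℕ) (F : Finset (Fin N))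
    (ha : a ≤ i)
    (h : ∃ T : Finset (Fin N),
      (∀ x ∈ T, n + (i - a) * m ≤ (x : ℕ) ∧ (x : ℕ) < n + (i - a) * m + m) ∧
      c (F ∪ T) = false) :
    c (F ∪ pickT N m n a c i F) = false := by
  unfold pickT
  rw [dif_pos ⟨ha, h⟩]
  exact h.choose_spec.2

/-- Cumulative blob function: `Gfun ... i S` is the union of all blobs chosen for
subsets of `S` at levels `< i`. -/
noncomputable def Gfun (N m n a : ℕ) (c : Finset (Fin N) → Bool) (ι : Fin n ↪ Fin N) :
    ℕ → Finset (Fin n) → Finset (Fin N)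
  | 0, _ => ∅
  | (i+1), S => Gfun N m n a c ι i S ∪
      (S.powerset.filter fun S' => S'.card = i).biUnion
        (fun S' => pickT N m n a c i (S'.map ι ∪ Gfun N m n a c ι i S'))

lemma Gfun_mono_set (N m n a : ℕ) (c : Finset (Fin N) → Bool) (ι : Fin n ↪ Fin N)
    (i : ℕ) {S S' : Finset (Fin n)} (h : S ⊆ S') :
    Gfun N m n a c ι i S ⊆ Gfun N m n a c ι i S' := by
  induction i with
  | zero => simp [Gfun]
  | succ i ih =>
    simp only [Gfun]
    exact Finset.union_subset_union ih
      (Finset.biUnion_subset_biUnion_of_subset_left _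
        (Finset.filter_subset_filter _ (Finset.powerset_mono.2 h)))

lemma Gfun_mono_nat (N m n a : ℕ) (c : Finset (Fin N) → Bool) (ι : Fin n ↪ Fin N)
    {i j : ℕ} (h : i ≤ j) (S : Finset (Fin n)) :
    Gfun N m n a c ι i S ⊆ Gfun N m n a c ι j S := by
  induction j with
  | zero => simp [Nat.le_zero.mp h]
  | succ j ih =>
    rcases Nat.lt_or_ge i (j+1) with hj | hj
    · exact (ih (by omega)).trans (by simp only [Gfun]; exact Finset.subset_union_left)
    · have : i = j + 1 := by omega
      subst this
      exact Finset.Subset.refl _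

lemma Gfun_bounds (N m n a : ℕ) (c : Finset (Fin N) → Bool) (ι : Fin n ↪ Fin N)
    (i : ℕ) (S : Finset (Fin n)) :
    ∀ x ∈ Gfun N m n a c ι i S, n ≤ (x : ℕ) ∧ (x : ℕ) < n + (i - a) * m := by
  induction i with
  | zero => simp [Gfun]
  | succ i ih =>
    intro x hx
    simp only [Gfun, Finset.mem_union, Finset.mem_biUnion, Finset.mem_filter] at hx
    have hmul : (i - a) * m ≤ (i + 1 - a) * m := Nat.mul_le_mul_right m (by omega)
    rcases hx with hx | ⟨S', _, hx⟩
    · have := ih x hx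
      omega
    · rcases Nat.lt_or_ge i a with hia | hia
      · rw [pickT_empty N m n a c i _ hia] at hx
        exact absurd hx (Finset.notMem_empty x)
      · have hb := pickT_bounds N m n a c i _ x hx
        have hsucc : (i + 1 - a) = (i - a) + 1 := by omega
        have hsm : ((i - a) + 1) * m = (i - a) * m + m := Nat.succ_mul _ _
        rw [hsucc, hsm]
        omega

lemma Gfun_eq_empty (N m n a : ℕ) (c : Finset (Fin N) → Bool) (ι : Fin n ↪ Fin N)
    {i : ℕ} (h : i ≤ a) (S : Finset (Fin n)) :
    Gfun N m n a c ι i S = ∅ := by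
  apply Finset.eq_empty_of_forall_notMem
  intro x hx
  have hb := Gfun_bounds N m n a c ι i S x hx
  have h0 : i - a = 0 := by omega
  rw [h0, Nat.zero_mul] at hb
  omega

lemma Gfun_succ_card (N m n a : ℕ) (c : Finset (Fin N) → Bool) (ι : Fin n ↪ Fin N)
    (i : ℕ) (S : Finset (Fin n)) (hS : S.card = i) :
    Gfun N m n a c ι (i+1) S = Gfun N m n a c ι i S ∪
      pickT N m n a c i (S.map ι ∪ Gfun N m n a c ι i S) := by
  have hfs : S.powerset.filter (fun S' => S'.card = i) = {S} := by
    ext S'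
    simp only [Finset.mem_filter, Finset.mem_powerset, Finset.mem_singleton]
    constructor
    · rintro ⟨hsub, hcard⟩
      exact Finset.eq_of_subset_of_card_le hsub (by omega)
    · rintro rfl; exact ⟨Finset.Subset.refl _, hS⟩
  simp [Gfun, hfs]

/-- If there is no red copy of `Q m`, then above any `F` lying below block `i`
there is a blue extension within block `i`. -/
lemma exists_blue_of_noRed (N m n a b : ℕ) (h1 : a + b ≤ n)
    (h2 : n + (n + 1 - a - b) * m ≤ N)
    (c : Finset (Fin N) → Bool) (hnored : ¬ HasRedCopy m N c)
    (i : ℕ) (hia : a ≤ i) (hib : i + b ≤ n) (F : Finset (Fin N))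
    (hF : ∀ x ∈ F, (x : ℕ) < n + (i - a) * m) :
    ∃ T : Finset (Fin N),
      (∀ x ∈ T, n + (i - a) * m ≤ (x : ℕ) ∧ (x : ℕ) < n + (i - a) * m + m) ∧
      c (F ∪ T) = false := by
  by_contra hcon
  push_neg at hcon
  apply hnored
  have hq : (i - a) + 1 ≤ n + 1 - a - b := by omega
  have hmul : ((i - a) + 1) * m ≤ (n + 1 - a - b) * m := Nat.mul_le_mul_right m hq
  have hsm : ((i - a) + 1) * m = (i - a) * m + m := Nat.succ_mul _ _
  have hlt : ∀ j : Fin m, n + (i - a) * m + (j : ℕ) < N := by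
    intro j
    have := j.isLt
    omega
  set e : Fin m ↪ Fin N :=
    ⟨fun j => ⟨n + (i - a) * m + (j : ℕ), hlt j⟩, by
      intro j k hjk
      have : n + (i - a) * m + (j : ℕ) = n + (i - a) * m + (k : ℕ) := congrArg Fin.val hjk
      exact Fin.val_injective (by omega)⟩ with he
  have hebound : ∀ (T : Finset (Fin m)) (x : Fin N), x ∈ T.map e →
      n + (i - a) * m ≤ (x : ℕ) ∧ (x : ℕ) < n + (i - a) * m + m := by
    intro T x hx
    rcases Finset.mem_map.mp hx with ⟨j, _, rfl⟩
    have := j.isLt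
    simp only [he, Function.Embedding.coeFn_mk]
    show n + (i - a) * m ≤ n + (i - a) * m + (j : ℕ) ∧ n + (i - a) * m + (j : ℕ) < n + (i - a) * m + m
    constructor <;> omega
  set f : Finset (Fin m) → Finset (Fin N) := fun T => F ∪ T.map e with hf
  have hiff : ∀ S T : Finset (Fin m), S ⊆ T ↔ f S ⊆ f T := by
    intro S T
    constructor
    · intro h
      exact Finset.union_subset_union_right (Finset.map_subset_map.mpr h)
    · intro h x hx
      have hmem : e x ∈ f T := h (Finset.mem_union_right _ (Finset.mem_map_of_mem e hx))
      rcases Finset.mem_union.mp hmem with hmem | hmem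
      · have h1' := hF _ hmem
        have h2' : n + (i - a) * m ≤ ((e x : Fin N) : ℕ) := by
          simp only [he, Function.Embedding.coeFn_mk]
          show n + (i - a) * m ≤ n + (i - a) * m + (x : ℕ)
          omega
        omega
      · rcases Finset.mem_map.mp hmem with ⟨y, hy, hxy⟩
        rwa [e.injective hxy] at hy
  refine ⟨f, copy_inj f hiff, hiff, ?_⟩
  intro T
  have := hcon (T.map e) (hebound T)
  simpa using this

/-- blob-type lemma: if n ≥ a + b and N ≥ n + (n + 1 − a − b)m, and the
coloring makes every set of size less than a blue and every set of size greater than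
N − b blue, then Q_N contains a blue copy of Q_n or a red copy of Q_m. -/
theorem blob_lemma (N m n a b : ℕ)
    (h1 : a + b ≤ n) (h2 : N ≥ n + (n + 1 - a - b) * m)
    (c : Finset (Fin N) → Bool)
    (hbot : ∀ S : Finset (Fin N), S.card < a → c S = false)
    (htop : ∀ S : Finset (Fin N), S.card > N - b → c S = false) :
    HasBlueCopy n N c ∨ HasRedCopy m N c := by
  by_cases hred : HasRedCopy m N c
  · exact Or.inr hred
  left
  have hnN : n ≤ N := le_trans (Nat.le_add_right _ _) h2
  set ι : Fin n ↪ Fin N := Fin.castLEEmb hnN with hι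
  have hιval : ∀ x : Fin n, ((ι x : Fin N) : ℕ) = (x : ℕ) := by
    intro x; simp [hι]
  have hmapval : ∀ (S : Finset (Fin n)) (x : Fin N), x ∈ S.map ι → (x : ℕ) < n := by
    intro S x hx
    rcases Finset.mem_map.mp hx with ⟨y, _, rfl⟩
    rw [hιval y]
    exact y.isLt
  set Etop : Finset (Fin N) :=
    (Finset.Ico n N).attachFin (fun x hx => (Finset.mem_Ico.mp hx).2) with hEtop
  have hEtopMem : ∀ x : Fin N, x ∈ Etop ↔ n ≤ (x : ℕ) := by
    intro x
    simp [hEtop, Finset.mem_attachFin, Finset.mem_Ico, x.isLt]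
  have hEtopCard : Etop.card = N - n := by
    simp [hEtop, Finset.card_attachFin]
  set D : Finset (Fin n) → Finset (Fin N) := fun S =>
    if S.card + b ≤ n then Gfun N m n a c ι (S.card + 1) S else Etop with hD
  set f : Finset (Fin n) → Finset (Fin N) := fun S => S.map ι ∪ D S with hf
  have hDn : ∀ (S : Finset (Fin n)) (x : Fin N), x ∈ D S → n ≤ (x : ℕ) := by
    intro S x hx
    simp only [hD] at hx
    split_ifs at hx with h
    · exact (Gfun_bounds N m n a c ι _ S x hx).1
    · exact (hEtopMem x).mp hx
  have hDmono : ∀ {S T : Finset (Fin n)}, S ⊆ T → D S ⊆ D T := by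
    intro S T h
    have hcard : S.card ≤ T.card := Finset.card_le_card h
    simp only [hD]
    split_ifs with hS hT hT
    · exact (Gfun_mono_set N m n a c ι _ h).trans
        (Gfun_mono_nat N m n a c ι (by omega) T)
    · intro x hx
      exact (hEtopMem x).mpr (Gfun_bounds N m n a c ι _ S x hx).1
    · omega
    · exact Finset.Subset.refl _
  have hiff : ∀ S T : Finset (Fin n), S ⊆ T ↔ f S ⊆ f T := by
    intro S T
    constructor
    · intro h
      exact Finset.union_subset_union (Finset.map_subset_map.mpr h) (hDmono h)
    · intro h x hx
      have hmem : ι x ∈ f T := h (Finset.mem_union_left _ (Finset.mem_map_of_mem ι hx))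
      rcases Finset.mem_union.mp hmem with hmem | hmem
      · rcases Finset.mem_map.mp hmem with ⟨y, hy, hxy⟩
        rwa [ι.injective hxy] at hy
      · have := hDn T _ hmem
        rw [hιval x] at this
        exact absurd this (not_le.mpr x.isLt)
  have hblue : ∀ S : Finset (Fin n), c (f S) = false := by
    intro S
    rcases Nat.lt_or_ge S.card a with hlow | hmid
    · -- low levels
      have hcond : S.card + b ≤ n := by omega
      have hG : Gfun N m n a c ι (S.card + 1) S = ∅ :=
        Gfun_eq_empty N m n a c ι (by omega) S
      have hfS : f S = S.map ι := by
        simp [hf, hD, hcond, hG]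
      rw [hfS]
      exact hbot _ (by rwa [Finset.card_map])
    · rcases le_or_gt (S.card + b) n with hcond | hcond
      · -- mid levels
        set i := S.card with hi
        have hFb : ∀ x ∈ S.map ι ∪ Gfun N m n a c ι i S, (x : ℕ) < n + (i - a) * m := by
          intro x hx
          rcases Finset.mem_union.mp hx with hx | hx
          · have := hmapval S x hx
            omega
          · exact (Gfun_bounds N m n a c ι i S x hx).2
        have hex := exists_blue_of_noRed N m n a b h1 h2 c hred i hmid hcond
          (S.map ι ∪ Gfun N m n a c ι i S) hFb
        have hfS : f S = (S.map ι ∪ Gfun N m n a c ι i S) ∪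
            pickT N m n a c i (S.map ι ∪ Gfun N m n a c ι i S) := by
          simp only [hf, hD, if_pos hcond]
          rw [Gfun_succ_card N m n a c ι i S rfl, Finset.union_assoc]
          rw [if_pos (show S.card + b ≤ n from hcond)]
        rw [hfS]
        exact pickT_blue N m n a c i _ hmid hex
      · -- top levels
        have hfS : f S = S.map ι ∪ Etop := by
          simp [hf, hD, not_le.mpr hcond]
        have hdisj : Disjoint (S.map ι) Etop := by
          rw [Finset.disjoint_left]
          intro x hx hx2
          have := hmapval S x hx
          have := (hEtopMem x).mp hx2
          omega
        have hcards : (f S).card = S.card + (N - n) := by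
          rw [hfS, Finset.card_union_of_disjoint hdisj, Finset.card_map, hEtopCard]
        apply htop
        rw [hcards]
        omega
  exact ⟨f, copy_inj f hiff, hiff, hblue⟩
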